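/- The generating function H_{n,m}(q,x,y,t) := Σ_{s≥0} (Σ_{α ∈ C(s,n), β ∈ C(s,m)} q^{EMD(α,β)} x^{T(α)} y^{T(β)}) t^s satisfies the recursion H_{n,m} = (H_{n-1,m} + H_{n,m-1} − H_{n-1,m-1})/(1 − q^{|n-m|} x^{n-1} y^{m-1} t), with H_{1,1} = 1/(1−t) and H_{0,m} = H_{n,0} = 0. -/

import Mathlib

open MvPolynomial PowerSeries

/-- Coefficient ring `ℤ[q,x,y]`. -/
abbrev R : Type := MvPolynomial (Fin 3) ℤ

/-- The variable `q`. -/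
noncomputable def q : R := MvPolynomial.X 0
/-- The variable `x`. -/
noncomputable def x : R := MvPolynomial.X 1
/-- The variable `y`. -/
noncomputable def y : R := MvPolynomial.X 2

/-- The finset of weak compositions of `s` into `n` parts. -/
def comps (s n : ℕ) : Finset (Fin n → ℕ) :=
  (Fintype.piFinset fun _ : Fin n => Finset.range (s + 1)).filter fun f => ∑ i, f i = s

/-- The word of a composition: the weakly increasing list of its entries' positions. -/
def word {n : ℕ} (α : Fin n → ℕ) : List ℕ :=
  (Finset.univ.sum fun i : Fin n => Multiset.replicate (α i) (i : ℕ)).sort (· ≤ ·)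

/-- The earth mover's distance `EMD(α,β) = ∑_{j=1}^s |w(α)_j − w(β)_j|`
(compositions with different numbers of parts are compared via their words,
shorter ones padded by zeros). -/
def emd (s : ℕ) {n m : ℕ} (α : Fin n → ℕ) (β : Fin m → ℕ) : ℕ :=
  ∑ j ∈ Finset.range s, (((word α).getD j 0 : ℤ) - ((word β).getD j 0 : ℤ)).natAbs

/-- The weighted total `T(α) = ∑ i·a_i`. -/
def wt {n : ℕ} (α : Fin n → ℕ) : ℕ :=
  ∑ i : Fin n, (i : ℕ) * α i

/-- The generating function
`H_{n,m}(q,x,y,t) = ∑_{s≥0} (∑_{α ∈ C(s,n), β ∈ C(s,m)} q^{EMD(α,β)} x^{T(α)} y^{T(β)}) tˢ`,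
with the convention `H_{0,m} = H_{n,0} = 0`. -/
noncomputable def H (n m : ℕ) : PowerSeries R :=
  if n = 0 ∨ m = 0 then 0
  else PowerSeries.mk fun s =>
    ∑ α ∈ comps s n, ∑ β ∈ comps s m,
      q ^ emd s α β * x ^ wt α * y ^ wt β

/-! ### Auxiliary definitions and lemmas -/

/-- `emd` as a function of the two words. -/
def E (s : ℕ) (u v : List ℕ) : ℕ :=
  ∑ j ∈ Finset.range s, ((u.getD j 0 : ℤ) - (v.getD j 0 : ℤ)).natAbs

lemma emd_eq {n m : ℕ} (s : ℕ) (α : Fin n → ℕ) (β : Fin m → ℕ) :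
    emd s α β = E s (word α) (word β) := rfl

/-- The coefficient of `tˢ` (defined for all `n`, `m`). -/
noncomputable def a (n m s : ℕ) : R :=
  ∑ α ∈ comps s n, ∑ β ∈ comps s m, q ^ E s (word α) (word β) * x ^ wt α * y ^ wt β

lemma mem_comps {s n : ℕ} {α : Fin n → ℕ} : α ∈ comps s n ↔ ∑ i, α i = s := by
  constructor
  · intro h; exact (Finset.mem_filter.mp h).2
  · intro h
    refine Finset.mem_filter.mpr ⟨Fintype.mem_piFinset.mpr fun i => ?_, h⟩
    rw [Finset.mem_range, Nat.lt_succ_iff, ← h]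
    exact Finset.single_le_sum (fun j _ => Nat.zero_le _) (Finset.mem_univ i)

lemma comps_parts_zero (s : ℕ) : comps (s + 1) 0 = ∅ := by
  ext α; simp [mem_comps]

lemma comps_zero (n : ℕ) : comps 0 n = {fun _ => 0} := by
  ext α
  simp [mem_comps, Finset.sum_eq_zero_iff, Finset.mem_singleton, funext_iff]

lemma word_coe {n : ℕ} (α : Fin n → ℕ) :
    ((word α : List ℕ) : Multiset ℕ)
      = Finset.univ.sum fun i : Fin n => Multiset.replicate (α i) (i : ℕ) :=
  Multiset.sort_eq _ _

lemma length_word {n : ℕ} (α : Fin n → ℕ) : (word α).length = ∑ i, α i := by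
  rw [← Multiset.coe_card, word_coe, Multiset.card_sum]
  simp

lemma mem_word_le {n : ℕ} {α : Fin (n + 1) → ℕ} {b : ℕ} (h : b ∈ word α) : b ≤ n := by
  have h' : b ∈ ((word α : List ℕ) : Multiset ℕ) := by simpa using h
  rw [word_coe] at h'
  rw [Multiset.mem_sum] at h'
  obtain ⟨i, -, hi⟩ := h'
  rw [Multiset.eq_of_mem_replicate hi]
  exact Nat.lt_succ_iff.mp i.isLt

lemma wordM_snoc {n : ℕ} (g : Fin n → ℕ) (k : ℕ) :
    (Finset.univ.sum fun i : Fin (n + 1) =>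
        Multiset.replicate ((Fin.snoc g k : Fin (n + 1) → ℕ) i) (i : ℕ))
      = (Finset.univ.sum fun i : Fin n => Multiset.replicate (g i) (i : ℕ))
        + Multiset.replicate k n := by
  rw [Fin.sum_univ_castSucc]
  simp

lemma word_snoc_zero {n : ℕ} (g : Fin n → ℕ) :
    word (Fin.snoc g 0 : Fin (n + 1) → ℕ) = word g := by
  unfold word
  rw [wordM_snoc]
  simp

lemma word_snoc_succ {n : ℕ} (g : Fin n → ℕ) (k : ℕ) :
    word (Fin.snoc g (k + 1) : Fin (n + 1) → ℕ)
      = word (Fin.snoc g k : Fin (n + 1) → ℕ) ++ [n] := by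
  refine List.Perm.eq_of_pairwise' (r := ((· ≤ ·) : ℕ → ℕ → Prop)) ?_ ?_ ?_
  rotate_right
  · rw [← Multiset.coe_eq_coe]
    have happ : ((word (Fin.snoc g k : Fin (n + 1) → ℕ) ++ [n] : List ℕ) : Multiset ℕ)
        = ((word (Fin.snoc g k : Fin (n + 1) → ℕ) : List ℕ) : Multiset ℕ) + {n} := rfl
    rw [happ, word_coe, word_coe, wordM_snoc, wordM_snoc, Multiset.replicate_add,
      Multiset.replicate_one, add_assoc]
  · exact Multiset.pairwise_sort _ _
  · refine List.pairwise_append.mpr ⟨Multiset.pairwise_sort _ _, List.pairwise_singleton _ _, ?_⟩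
    intro b hb c hc
    rw [List.mem_singleton] at hc
    subst hc
    exact mem_word_le hb

lemma wt_snoc {n : ℕ} (g : Fin n → ℕ) (k : ℕ) :
    wt (Fin.snoc g k : Fin (n + 1) → ℕ) = wt g + n * k := by
  unfold wt
  rw [Fin.sum_univ_castSucc]
  simp

lemma sum_snoc {n : ℕ} (g : Fin n → ℕ) (k : ℕ) :
    ∑ i, (Fin.snoc g k : Fin (n + 1) → ℕ) i = (∑ i, g i) + k := by
  rw [Fin.sum_univ_castSucc]
  simp

lemma E_append {s : ℕ} {u v : List ℕ} (b c : ℕ) (hu : u.length = s) (hv : v.length = s) :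
    E (s + 1) (u ++ [b]) (v ++ [c]) = E s u v + ((b : ℤ) - c).natAbs := by
  unfold E
  rw [Finset.sum_range_succ]
  congr 1
  · refine Finset.sum_congr rfl fun j hj => ?_
    rw [Finset.mem_range] at hj
    rw [List.getD_append u [b] 0 j (by omega), List.getD_append v [c] 0 j (by omega)]
  · rw [List.getD_append_right u [b] 0 s (by omega), List.getD_append_right v [c] 0 s (by omega),
      hu, hv, Nat.sub_self]
    simp

/-- Summing over compositions with last part `0` is summing over one fewer part. -/
lemma sum_last_eq_zero (s n : ℕ) (G : List ℕ → ℕ → R) :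
    ∑ α ∈ (comps s (n + 1)).filter (fun α => α (Fin.last n) = 0), G (word α) (wt α)
      = ∑ α ∈ comps s n, G (word α) (wt α) := by
  refine Finset.sum_nbij' (fun α => Fin.init α) (fun g => (Fin.snoc g 0 : Fin (n + 1) → ℕ))
    ?_ ?_ ?_ ?_ ?_
  · intro α hα
    obtain ⟨h1, h2⟩ := Finset.mem_filter.mp hα
    rw [mem_comps] at h1 ⊢
    have h3 := sum_snoc (Fin.init α) (α (Fin.last n))
    rw [Fin.snoc_init_self] at h3
    omega
  · intro g hg
    rw [mem_comps] at hg
    refine Finset.mem_filter.mpr ⟨mem_comps.mpr ?_, ?_⟩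
    · rw [sum_snoc]; omega
    · exact Fin.snoc_last _ _
  · intro α hα
    have h2 := (Finset.mem_filter.mp hα).2
    conv_rhs => rw [← Fin.snoc_init_self α]
    rw [h2]
  · intro g _
    exact Fin.init_snoc _ _
  · intro α hα
    have h2 := (Finset.mem_filter.mp hα).2
    conv_lhs => rw [← Fin.snoc_init_self α]
    rw [h2, word_snoc_zero, wt_snoc]
    simp

/-- Summing over compositions of `s+1` with nonzero last part is summing over
compositions of `s`, with the word gaining a last letter `n`. -/
lemma sum_last_ne_zero (s n : ℕ) (G : List ℕ → ℕ → R) :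
    ∑ α ∈ (comps (s + 1) (n + 1)).filter (fun α => ¬α (Fin.last n) = 0), G (word α) (wt α)
      = ∑ α ∈ comps s (n + 1), G (word α ++ [n]) (wt α + n) := by
  refine Finset.sum_nbij'
    (fun α => (Fin.snoc (Fin.init α) (α (Fin.last n) - 1) : Fin (n + 1) → ℕ))
    (fun α => (Fin.snoc (Fin.init α) (α (Fin.last n) + 1) : Fin (n + 1) → ℕ))
    ?_ ?_ ?_ ?_ ?_
  · intro α hα
    obtain ⟨h1, h2⟩ := Finset.mem_filter.mp hα
    rw [mem_comps] at h1 ⊢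
    have h3 := sum_snoc (Fin.init α) (α (Fin.last n))
    rw [Fin.snoc_init_self] at h3
    rw [sum_snoc]
    omega
  · intro α hα
    rw [mem_comps] at hα
    refine Finset.mem_filter.mpr ⟨mem_comps.mpr ?_, ?_⟩
    · have h3 := sum_snoc (Fin.init α) (α (Fin.last n))
      rw [Fin.snoc_init_self] at h3
      rw [sum_snoc]
      omega
    · rw [Fin.snoc_last]
      omega
  · intro α hα
    have h2 := (Finset.mem_filter.mp hα).2
    rw [Fin.init_snoc, Fin.snoc_last, Nat.sub_add_cancel (Nat.one_le_iff_ne_zero.mpr h2),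
      Fin.snoc_init_self]
  · intro α _
    rw [Fin.init_snoc, Fin.snoc_last, Nat.add_sub_cancel, Fin.snoc_init_self]
  · intro α hα
    have h2 := (Finset.mem_filter.mp hα).2
    obtain ⟨k, hk⟩ : ∃ k, α (Fin.last n) = k + 1 :=
      ⟨α (Fin.last n) - 1, (Nat.succ_pred_eq_of_ne_zero h2).symm⟩
    have hα' : α = (Fin.snoc (Fin.init α) (k + 1) : Fin (n + 1) → ℕ) := by
      rw [← hk, Fin.snoc_init_self]
    conv_lhs => rw [hα']
    rw [word_snoc_succ, wt_snoc, hk, Nat.add_sub_cancel, wt_snoc,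
      Nat.mul_succ, ← Nat.add_assoc]

lemma a_zero_coeff (n m : ℕ) : a n m 0 = 1 := by
  unfold a
  rw [comps_zero, comps_zero, Finset.sum_singleton, Finset.sum_singleton]
  simp [E, wt]

lemma a_left_zero (m s : ℕ) : a 0 m (s + 1) = 0 := by
  unfold a
  rw [comps_parts_zero, Finset.sum_empty]

lemma a_right_zero (n s : ℕ) : a n 0 (s + 1) = 0 := by
  unfold a
  rw [comps_parts_zero]
  simp

lemma length_word_of_mem {s n : ℕ} {α : Fin n → ℕ} (h : α ∈ comps s n) :
    (word α).length = s := by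
  rw [length_word, mem_comps.mp h]

/-- The key combinatorial recursion for the coefficients. -/
lemma a_rec (n m s : ℕ) :
    a (n + 1) (m + 1) (s + 1) + a n m (s + 1)
      = a n (m + 1) (s + 1) + a (n + 1) m (s + 1)
        + q ^ ((n : ℤ) - m).natAbs * x ^ n * y ^ m * a (n + 1) (m + 1) s := by
  set c : R := q ^ ((n : ℤ) - m).natAbs * x ^ n * y ^ m with hc
  -- the sum over pairs with nonzero last part of α, full sum over β with m parts
  set T : R := ∑ α ∈ (comps (s + 1) (n + 1)).filter (fun α => ¬α (Fin.last n) = 0),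
      ∑ β ∈ comps (s + 1) m, q ^ E (s + 1) (word α) (word β) * x ^ wt α * y ^ wt β with hT
  have claim2 : a (n + 1) m (s + 1) = a n m (s + 1) + T := by
    rw [hT]
    unfold a
    rw [← Finset.sum_filter_add_sum_filter_not (comps (s + 1) (n + 1))
      (fun α => α (Fin.last n) = 0)]
    congr 1
    exact sum_last_eq_zero (s + 1) n
      (fun w t => ∑ β ∈ comps (s + 1) m, q ^ E (s + 1) w (word β) * x ^ t * y ^ wt β)
  have claim1 : a (n + 1) (m + 1) (s + 1)
      = a n (m + 1) (s + 1) + (T + c * a (n + 1) (m + 1) s) := by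
    rw [hT]
    conv_lhs => unfold a
    rw [← Finset.sum_filter_add_sum_filter_not (comps (s + 1) (n + 1))
      (fun α => α (Fin.last n) = 0)]
    congr 1
    · exact sum_last_eq_zero (s + 1) n
        (fun w t => ∑ β ∈ comps (s + 1) (m + 1), q ^ E (s + 1) w (word β) * x ^ t * y ^ wt β)
    -- now the part with α's last part nonzero
    have hinner : ∀ α : Fin (n + 1) → ℕ,
        ∑ β ∈ comps (s + 1) (m + 1),
            q ^ E (s + 1) (word α) (word β) * x ^ wt α * y ^ wt β
          = (∑ β ∈ comps (s + 1) m,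
              q ^ E (s + 1) (word α) (word β) * x ^ wt α * y ^ wt β)
            + ∑ β ∈ (comps (s + 1) (m + 1)).filter (fun β => ¬β (Fin.last m) = 0),
                q ^ E (s + 1) (word α) (word β) * x ^ wt α * y ^ wt β := by
      intro α
      rw [← Finset.sum_filter_add_sum_filter_not (comps (s + 1) (m + 1))
        (fun β => β (Fin.last m) = 0)]
      congr 1
      exact sum_last_eq_zero (s + 1) m
        (fun w t => q ^ E (s + 1) (word α) w * x ^ wt α * y ^ t)
    simp only [hinner]
    rw [Finset.sum_add_distrib]
    congr 1
    -- the doubly-nonzero part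
    have houter : ∑ α ∈ (comps (s + 1) (n + 1)).filter (fun α => ¬α (Fin.last n) = 0),
        ∑ β ∈ (comps (s + 1) (m + 1)).filter (fun β => ¬β (Fin.last m) = 0),
          q ^ E (s + 1) (word α) (word β) * x ^ wt α * y ^ wt β
        = ∑ α ∈ comps s (n + 1),
            ∑ β ∈ (comps (s + 1) (m + 1)).filter (fun β => ¬β (Fin.last m) = 0),
              q ^ E (s + 1) (word α ++ [n]) (word β) * x ^ (wt α + n) * y ^ wt β :=
      sum_last_ne_zero s n
        (fun w t => ∑ β ∈ (comps (s + 1) (m + 1)).filter (fun β => ¬β (Fin.last m) = 0),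
          q ^ E (s + 1) w (word β) * x ^ t * y ^ wt β)
    rw [houter]
    have hinner2 : ∀ α : Fin (n + 1) → ℕ,
        ∑ β ∈ (comps (s + 1) (m + 1)).filter (fun β => ¬β (Fin.last m) = 0),
            q ^ E (s + 1) (word α ++ [n]) (word β) * x ^ (wt α + n) * y ^ wt β
          = ∑ β ∈ comps s (m + 1),
              q ^ E (s + 1) (word α ++ [n]) (word β ++ [m]) * x ^ (wt α + n) * y ^ (wt β + m) :=
      fun α => sum_last_ne_zero s m
        (fun w t => q ^ E (s + 1) (word α ++ [n]) w * x ^ (wt α + n) * y ^ t)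
    simp only [hinner2]
    unfold a
    rw [Finset.mul_sum]
    refine Finset.sum_congr rfl fun α hα => ?_
    rw [Finset.mul_sum]
    refine Finset.sum_congr rfl fun β hβ => ?_
    rw [E_append n m (length_word_of_mem hα) (length_word_of_mem hβ),
      pow_add, pow_add, pow_add, hc]
    ring
  linear_combination claim1 - claim2

/-! ### Power-series level lemmas -/

lemma H_eq (n m : ℕ) (hn : n ≠ 0) (hm : m ≠ 0) : H n m = PowerSeries.mk (a n m) := by
  rw [H, if_neg (by simp [hn, hm])]
  rfl

lemma mk_a_left_zero (m : ℕ) : (PowerSeries.mk (a 0 m) : PowerSeries R) = 1 := by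
  refine PowerSeries.ext fun s => ?_
  cases s with
  | zero => simp [a_zero_coeff]
  | succ s => simp [a_left_zero]

lemma mk_a_right_zero (n : ℕ) : (PowerSeries.mk (a n 0) : PowerSeries R) = 1 := by
  refine PowerSeries.ext fun s => ?_
  cases s with
  | zero => simp [a_zero_coeff]
  | succ s => simp [a_right_zero]

lemma mk_a_rec (n m : ℕ) :
    PowerSeries.mk (a (n + 1) (m + 1))
        * (1 - PowerSeries.C (R := _root_.R) (q ^ ((n : ℤ) - m).natAbs * x ^ n * y ^ m) * PowerSeries.X)
      = PowerSeries.mk (a n (m + 1)) + PowerSeries.mk (a (n + 1) m)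
        - PowerSeries.mk (a n m) := by
  refine PowerSeries.ext fun s => ?_
  rw [mul_sub, mul_one, ← mul_assoc, mul_comm (PowerSeries.mk (a (n + 1) (m + 1)))
    (PowerSeries.C (R := _root_.R) _)]
  cases s with
  | zero =>
    simp only [map_sub, map_add, PowerSeries.coeff_mk]
    rw [PowerSeries.coeff_zero_eq_constantCoeff, map_mul, PowerSeries.constantCoeff_X, mul_zero,
      a_zero_coeff, a_zero_coeff, a_zero_coeff, a_zero_coeff]
    ring
  | succ s =>
    simp only [map_sub, map_add, PowerSeries.coeff_mk, PowerSeries.coeff_succ_mul_X,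
      PowerSeries.coeff_C_mul, PowerSeries.coeff_mk]
    linear_combination a_rec n m s

/-- The recursion
`H_{n,m} · (1 − q^{|n−m|} x^{n-1} y^{m-1} t) = H_{n-1,m} + H_{n,m-1} − H_{n-1,m-1}`
(for `n, m ≥ 1` not both equal to 1), together with the base cases
`H_{1,1} = 1/(1−t)` and `H_{0,m} = H_{n,0} = 0`. -/
theorem H_recursion (n m : ℕ) :
    (1 ≤ n → 1 ≤ m → 3 ≤ n + m →
      H n m * (1 - PowerSeries.C (R := _root_.R) (q ^ ((n : ℤ) - m).natAbs * x ^ (n - 1) * y ^ (m - 1))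
          * PowerSeries.X)
        = H (n - 1) m + H n (m - 1) - H (n - 1) (m - 1)) ∧
    H 1 1 * (1 - PowerSeries.X) = 1 ∧
    H 0 m = 0 ∧ H n 0 = 0 := by
  refine ⟨?_, ?_, ?_, ?_⟩
  · intro hn hm h3
    obtain ⟨n', rfl⟩ : ∃ k, n = k + 1 := ⟨n - 1, by omega⟩
    obtain ⟨m', rfl⟩ : ∃ k, m = k + 1 := ⟨m - 1, by omega⟩
    rw [H_eq _ _ (by omega) (by omega)]
    simp only [Nat.add_sub_cancel]
    rw [show (((n' + 1 : ℕ) : ℤ) - ((m' + 1 : ℕ) : ℤ)) = ((n' : ℤ) - m') by push_cast; ring]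
    rw [mk_a_rec n' m']
    rcases n' with _ | n'' <;> rcases m' with _ | m''
    · omega
    · rw [mk_a_left_zero, mk_a_left_zero, H_eq 1 (m'' + 1) (by omega) (by omega),
        H, if_pos (Or.inl rfl), H, if_pos (Or.inl rfl)]
      ring
    · rw [mk_a_right_zero, mk_a_right_zero, H_eq (n'' + 1) 1 (by omega) (by omega),
        H, if_pos (Or.inr rfl), H, if_pos (Or.inr rfl)]
      ring
    · rw [H_eq _ _ (by omega) (by omega), H_eq _ _ (by omega) (by omega),
        H_eq _ _ (by omega) (by omega)]
  · have h := mk_a_rec 0 0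
    rw [mk_a_left_zero, mk_a_right_zero, mk_a_left_zero] at h
    simp only [Nat.cast_zero, sub_self, Int.natAbs_zero, pow_zero, one_mul, mul_one, map_one,
      one_mul] at h
    rw [H_eq 1 1 (by omega) (by omega)]
    rw [h]
    ring
  · rw [H, if_pos (Or.inl rfl)]
  · rw [H, if_pos (Or.inr rfl)]
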